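/- Let U be a fine normal ultrafilter on I := 𝒫_κ(λ). Then for every ordinal ξ ∈ κ and every function F assigning to each x ∈ I a ZFSet, one has {x ∈ I : F(x) ∈ ξ} ∈ U if and only if there is an ordinal η ∈ ξ with {x ∈ I : F(x) = η} ∈ U. (The combinatorial content of Claim 2.2.5 (1): the ultrapower embedding is the identity below κ.) -/

import Mathlib

/-- `x` is a von Neumann ordinal: a transitive set of transitive sets. -/
def IsOrd (x : ZFSet) : Prop := x.IsTransitive ∧ ∀ y ∈ x, ZFSet.IsTransitive y

/-- `f` is an injective ZFSet-function from `x` to `y`. -/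
def IsInjFn (x y f : ZFSet) : Prop :=
  ZFSet.IsFunc x y f ∧
    ∀ a ∈ x, ∀ b ∈ x, ∀ c : ZFSet, ZFSet.pair a c ∈ f → ZFSet.pair b c ∈ f → a = b

/-- `f` is a ZFSet-bijection between `x` and `y`. -/
def IsBijFn (x y f : ZFSet) : Prop :=
  IsInjFn x y f ∧ ∀ c ∈ y, ∃ a ∈ x, ZFSet.pair a c ∈ f

/-- `x` is a cardinal: an ordinal admitting no ZFSet-bijection with any of its elements. -/
def IsCard (x : ZFSet) : Prop := IsOrd x ∧ ∀ y ∈ x, ¬ ∃ f : ZFSet, IsBijFn x y f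

/-- `𝒫_κ(λ)`: the ZFSet of all subsets of `λ` admitting a ZFSet-injection into some
element of `κ`. -/
def Pk (κ lam : ZFSet) : ZFSet :=
  ZFSet.sep (fun x => ∃ e ∈ κ, ∃ f : ZFSet, IsInjFn x e f) (ZFSet.powerset lam)

/-- `U` is an ultrafilter on the family of ZFSet-subsets of `I`: `∅ ∉ U`, every member of
`U` is a subset of `I`, `U` is closed under binary intersections and under supersets among
subsets of `I`, and for every `A ⊆ I` either `A ∈ U` or `I ∖ A ∈ U`. -/
def IsZUltrafilterOn (I : ZFSet) (U : Set ZFSet) : Prop :=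
  (∅ : ZFSet) ∉ U ∧ (∀ A ∈ U, A ⊆ I) ∧ (∀ A ∈ U, ∀ B ∈ U, A ∩ B ∈ U) ∧
    (∀ A ∈ U, ∀ B : ZFSet, A ⊆ B → B ⊆ I → B ∈ U) ∧
    (∀ A : ZFSet, A ⊆ I → (A ∈ U ∨ I \ A ∈ U))

/-- `U` is fine: `{x ∈ I : x₀ ⊆ x} ∈ U` for every `x₀ ∈ I`. -/
def IsZFineOn (I : ZFSet) (U : Set ZFSet) : Prop :=
  ∀ x₀ ∈ I, ZFSet.sep (fun x => x₀ ⊆ x) I ∈ U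

/-- `U` is normal: the diagonal intersection of any `λ`-indexed family of members of `U`
belongs to `U`. -/
def IsZNormalOn (lam I : ZFSet) (U : Set ZFSet) : Prop :=
  ∀ A : ZFSet → ZFSet, (∀ ξ ∈ lam, A ξ ∈ U) →
    ZFSet.sep (fun x => ∀ ξ ∈ x, x ∈ A ξ) I ∈ U

/-- The identity function on `ξ` as a ZFSet. -/
def zid (ξ : ZFSet) : ZFSet :=
  ZFSet.sep (fun p => ∃ a ∈ ξ, p = ZFSet.pair a a) (ZFSet.prod ξ ξ)

theorem zid_inj (ξ : ZFSet) : IsInjFn ξ ξ (zid ξ) := by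
  constructor
  · constructor
    · intro p hp
      exact (ZFSet.mem_sep.1 hp).1
    · intro z hz
      refine ⟨z, ZFSet.mem_sep.2 ⟨ZFSet.pair_mem_prod.2 ⟨hz, hz⟩, z, hz, rfl⟩, ?_⟩
      intro w hw
      obtain ⟨-, a, -, ha⟩ := ZFSet.mem_sep.1 hw
      obtain ⟨h1, h2⟩ := ZFSet.pair_injective ha
      rw [h2, ← h1]
  · intro a _ b _ c hac hbc
    obtain ⟨-, a', -, ha⟩ := ZFSet.mem_sep.1 hac
    obtain ⟨-, b', -, hb⟩ := ZFSet.mem_sep.1 hbc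
    obtain ⟨ha1, ha2⟩ := ZFSet.pair_injective ha
    obtain ⟨hb1, hb2⟩ := ZFSet.pair_injective hb
    exact ha1.trans (ha2.symm.trans (hb2.trans hb1.symm))

/-- The combinatorial content of Claim 2.2.5 (1): if `U` is a fine normal ultrafilter on
`I := 𝒫_κ(λ)`, `ξ ∈ κ`, and `F` assigns a ZFSet to each `x ∈ I`, then
`{x ∈ I : F(x) ∈ ξ} ∈ U` iff there is `η ∈ ξ` with `{x ∈ I : F(x) = η} ∈ U`. -/
theorem claim_2_2_5_1 (κ lam : ZFSet) (hκcard : IsCard κ) (hlam : IsOrd lam) (hkl : κ ⊆ lam)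
    (U : Set ZFSet)
    (hUF : IsZUltrafilterOn (Pk κ lam) U)
    (hfine : IsZFineOn (Pk κ lam) U)
    (hnormal : IsZNormalOn lam (Pk κ lam) U)
    (ξ : ZFSet) (hξ : ξ ∈ κ) (F : ZFSet → ZFSet) :
    ZFSet.sep (fun x => F x ∈ ξ) (Pk κ lam) ∈ U ↔
      ∃ η ∈ ξ, ZFSet.sep (fun x => F x = η) (Pk κ lam) ∈ U := by
  classical
  set I := Pk κ lam with hI
  obtain ⟨hne, hsub, hinter, hsuper, hcomp⟩ := hUF
  constructor
  · intro hA
    by_contra hcon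
    push_neg at hcon
    -- Each set {x : F x = η} for η ∈ ξ has complement in U.
    have hcompl : ∀ η ∈ ξ, I \ ZFSet.sep (fun x => F x = η) I ∈ U := by
      intro η hη
      rcases hcomp (ZFSet.sep (fun x => F x = η) I) (fun z hz => (ZFSet.mem_sep.1 hz).1) with h | h
      · exact absurd h (hcon η hη)
      · exact h
    have hIU : I ∈ U := by
      rcases hcomp I (fun z hz => hz) with h | h
      · exact h
      · have : I \ I = (∅ : ZFSet) := by
          rw [ZFSet.eq_empty]
          intro y hy
          exact (ZFSet.mem_sdiff.1 hy).2 (ZFSet.mem_sdiff.1 hy).1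
        rw [this] at h
        exact absurd h hne
    -- λ-indexed family
    set A : ZFSet → ZFSet := fun η =>
      if η ∈ ξ then I \ ZFSet.sep (fun x => F x = η) I else I with hAdef
    have hAU : ∀ η ∈ lam, A η ∈ U := by
      intro η _
      by_cases h : η ∈ ξ
      · simp only [hAdef, if_pos h]; exact hcompl η h
      · simp only [hAdef, if_neg h]; exact hIU
    have hD := hnormal A hAU
    -- ξ ∈ I
    have hξI : ξ ∈ I := by
      rw [hI, Pk, ZFSet.mem_sep]
      refine ⟨ZFSet.mem_powerset.2 fun z hz => hkl (hκcard.1.1 ξ hξ hz), ξ, hξ, zid ξ, zid_inj ξ⟩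
    have hS := hfine ξ hξI
    -- intersect
    have hX : ZFSet.sep (fun x => ∀ η ∈ x, x ∈ A η) I ∩
        (ZFSet.sep (fun x => F x ∈ ξ) I ∩ ZFSet.sep (fun x => ξ ⊆ x) I) ∈ U :=
      hinter _ hD _ (hinter _ hA _ hS)
    have hXne : ZFSet.sep (fun x => ∀ η ∈ x, x ∈ A η) I ∩
        (ZFSet.sep (fun x => F x ∈ ξ) I ∩ ZFSet.sep (fun x => ξ ⊆ x) I) ≠ (∅ : ZFSet) := by
      intro h
      rw [h] at hX
      exact hne hX
    obtain ⟨x, hx⟩ := (ZFSet.eq_empty_or_nonempty _).resolve_left hXne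
    rw [SetLike.mem_coe, ZFSet.mem_inter, ZFSet.mem_inter] at hx
    obtain ⟨hx1, hx2, hx3⟩ := hx
    obtain ⟨-, hxD⟩ := ZFSet.mem_sep.1 hx1
    obtain ⟨-, hxF⟩ := ZFSet.mem_sep.1 hx2
    obtain ⟨-, hxS⟩ := ZFSet.mem_sep.1 hx3
    have hFx : F x ∈ x := hxS hxF
    have := hxD (F x) hFx
    simp only [hAdef, if_pos hxF] at this
    exact (ZFSet.mem_sdiff.1 this).2 (ZFSet.mem_sep.2 ⟨(ZFSet.mem_sdiff.1 this).1, rfl⟩)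
  · rintro ⟨η, hη, hU⟩
    refine hsuper _ hU _ ?_ (fun z hz => (ZFSet.mem_sep.1 hz).1)
    intro z hz
    obtain ⟨hzI, hzF⟩ := ZFSet.mem_sep.1 hz
    exact ZFSet.mem_sep.2 ⟨hzI, hzF ▸ hη⟩
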